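/- Let Δ(t_1,t_2) = (t_1 + t_2)(t_1 t_2 + 1) − 4 t_1 t_2 and let W = V(Δ) ⊂ (ℂ*)^2. Then the exponential tangent cone of W ∪ {1} at 1 is {0}, while the ordinary tangent cone at 1 is the zero set of x_1² + x_2², a union of two lines defined over ℂ but not over ℚ. -/
import Mathlib


open MvPolynomial

/-- The coordinatewise exponential, landing in the units of `ℂ`. -/
noncomputable def expU (x : ℂ) : ℂˣ := Units.mk0 (Complex.exp x) (Complex.exp_ne_zero x)

/-- The exponential tangent cone at `1` of a subset `W ⊆ (ℂ*)ⁿ`. -/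
noncomputable def tauOne {n : ℕ} (W : Set (Fin n → ℂˣ)) : Set (Fin n → ℂ) :=
  { z | ∀ l : ℂ, (fun i => expU (l * z i)) ∈ W }

/-- `Δ(t₁,t₂) = (t₁ + t₂)(t₁t₂ + 1) - 4 t₁ t₂`. -/
noncomputable def Delta15 : MvPolynomial (Fin 2) ℂ :=
  (X 0 + X 1) * (X 0 * X 1 + 1) - C 4 * (X 0 * X 1)

/-- `W = V(Δ) ⊆ (ℂ*)²`. -/
noncomputable def W15 : Set (Fin 2 → ℂˣ) :=
  { z | MvPolynomial.eval (fun i => (z i : ℂ)) Delta15 = 0 }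

/-- `Δ̃(x₁,x₂) = Δ(x₁+1, x₂+1)`. -/
noncomputable def Dtilde15 : MvPolynomial (Fin 2) ℂ :=
  MvPolynomial.bind₁ (fun i : Fin 2 => X i + 1) Delta15

section Aux

open Complex

/-- Auxiliary family of exponential sums: `S a b k` is the `k`-th derivative of
`l ↦ Δ(e^{al}, e^{bl})`. -/
noncomputable def auxS (a b : ℂ) (k : ℕ) (l : ℂ) : ℂ :=
  (2*a+b)^k * exp ((2*a+b)*l) + a^k * exp (a*l) + (a+2*b)^k * exp ((a+2*b)*l)
    + b^k * exp (b*l) - 4*(a+b)^k * exp ((a+b)*l)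

lemma deriv_auxS (a b : ℂ) (k : ℕ) : deriv (auxS a b k) = auxS a b (k+1) := by
  funext l
  have h : ∀ c : ℂ, HasDerivAt (fun l : ℂ => exp (c*l)) (c * exp (c*l)) l := by
    intro c
    simpa [mul_comm] using ((hasDerivAt_id l).const_mul c).cexp
  have h1 := (h (2*a+b)).const_mul ((2*a+b)^k)
  have h2 := (h a).const_mul (a^k)
  have h3 := (h (a+2*b)).const_mul ((a+2*b)^k)
  have h4 := (h b).const_mul (b^k)
  have h5 := (h (a+b)).const_mul (4*(a+b)^k)
  have h' := (((h1.add h2).add h3).add h4).sub h5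
  have H : HasDerivAt (auxS a b k) (auxS a b (k+1) l) l := by
    have heq : auxS a b (k+1) l = (2*a+b)^k * ((2*a+b) * exp ((2*a+b)*l)) + a^k * (a*exp (a*l)) +
        (a+2*b)^k * ((a+2*b) * exp ((a+2*b)*l)) + b^k * (b*exp (b*l))
        - 4*(a+b)^k * ((a+b)*exp ((a+b)*l)) := by
      simp only [auxS]; ring
    rw [heq]
    exact h'
  exact H.deriv

lemma auxS_zero (a b : ℂ) (h0 : ∀ l, auxS a b 0 l = 0) : ∀ k, ∀ l, auxS a b k l = 0 := by
  intro k
  induction k with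
  | zero => exact h0
  | succ n ih =>
    intro l
    have hz : auxS a b n = 0 := funext ih
    rw [← deriv_auxS, hz, show (0:ℂ→ℂ) = fun _ => (0:ℂ) from rfl, deriv_const]

lemma key_aux (a b : ℂ)
    (h : ∀ l : ℂ, (exp (a*l) + exp (b*l)) * (exp (a*l) * exp (b*l) + 1)
        - 4 * (exp (a*l) * exp (b*l)) = 0) : a = 0 ∧ b = 0 := by
  have h0 : ∀ l, auxS a b 0 l = 0 := by
    intro l
    have hl := h l
    simp only [auxS, pow_zero, one_mul]
    rw [show ((2*a+b)*l) = a*l + (a*l + b*l) by ring,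
        show ((a+2*b)*l) = b*l + (a*l + b*l) by ring,
        show ((a+b)*l) = a*l + b*l by ring]
    simp only [Complex.exp_add]
    linear_combination hl
  have hs := auxS_zero a b h0
  have e2 : (2*a+b)^2 + a^2 + (a+2*b)^2 + b^2 - 4*(a+b)^2 = 0 := by
    have := hs 2 0; simpa [auxS] using this
  have e4 : (2*a+b)^4 + a^4 + (a+2*b)^4 + b^4 - 4*(a+b)^4 = 0 := by
    have := hs 4 0; simpa [auxS] using this
  have hab : a^2 + b^2 = 0 := by linear_combination e2 / 2
  have ha4 : a^4 = 0 := by linear_combination e4/4 - (10*a^2 + 24*a*b + 14*b^2)/4 * hab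
  have ha : a = 0 := pow_eq_zero_iff (n := 4) (by norm_num) |>.mp ha4
  have hb2 : b^2 = 0 := by linear_combination hab - a*ha
  have hb : b = 0 := pow_eq_zero_iff (n := 2) (by norm_num) |>.mp hb2
  exact ⟨ha, hb⟩

lemma Dtilde15_eq : Dtilde15 = X 0 ^ 2 * X 1 + X 0 * X 1 ^ 2 + X 0 ^ 2 + X 1 ^ 2 := by
  simp only [Dtilde15, Delta15, map_sub, map_add, map_mul, map_one, map_ofNat,
    MvPolynomial.bind₁_X_right, MvPolynomial.bind₁_C_right]
  ring

lemma hcomp_aux {p : MvPolynomial (Fin 2) ℂ} {m : ℕ} (h : p.IsHomogeneous m) (n : ℕ) :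
    homogeneousComponent n p = if n = m then p else 0 :=
  homogeneousComponent_of_mem ((mem_homogeneousSubmodule _ _).mpr h)

lemma hom3_aux : (X 0 ^ 2 * X 1 : MvPolynomial (Fin 2) ℂ).IsHomogeneous 3 := by
  have := ((isHomogeneous_X ℂ (0:Fin 2)).pow 2).mul (isHomogeneous_X ℂ (1:Fin 2))
  simpa using this

lemma hom3'_aux : (X 0 * X 1 ^ 2 : MvPolynomial (Fin 2) ℂ).IsHomogeneous 3 := by
  have := (isHomogeneous_X ℂ (0:Fin 2)).mul ((isHomogeneous_X ℂ (1:Fin 2)).pow 2)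
  simpa using this

lemma hom2_aux (i : Fin 2) : (X i ^ 2 : MvPolynomial (Fin 2) ℂ).IsHomogeneous 2 := by
  have := (isHomogeneous_X ℂ i).pow 2
  simpa using this

end Aux

/-- For `Δ = (t₁+t₂)(t₁t₂+1) - 4t₁t₂` and `W = V(Δ) ⊆ (ℂ*)²`:  the exponential tangent cone
of `W ∪ {1}` at `1` is `{0}`, while the initial form of `Δ(x₁+1, x₂+1)` is `x₁² + x₂²`, so
the ordinary tangent cone at `1` is the zero set of `x₁² + x₂²` — the union of the two lines
`x₂ = ± i x₁`, which are defined over `ℂ` but not over `ℚ` (they contain no nonzero rational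
point). -/
theorem example_no_one_finite_model :
    tauOne (W15 ∪ {1}) = {0} ∧
    (∀ j < 2, MvPolynomial.homogeneousComponent j Dtilde15 = 0) ∧
    MvPolynomial.homogeneousComponent 2 Dtilde15 = X 0 ^ 2 + X 1 ^ 2 ∧
    { z : Fin 2 → ℂ | z 0 ^ 2 + z 1 ^ 2 = 0 } =
      { z | z 1 = Complex.I * z 0 } ∪ { z | z 1 = -Complex.I * z 0 } ∧
    (∀ z : Fin 2 → ℂ, z 0 ^ 2 + z 1 ^ 2 = 0 → (∀ i, ∃ q : ℚ, z i = (q : ℂ)) → z = 0) := by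
  refine ⟨?_, ?_, ?_, ?_, ?_⟩
  · -- exponential tangent cone is {0}
    ext z
    simp only [Set.mem_singleton_iff]
    constructor
    · intro hz
      -- every l gives Δ(e^{l z₀}, e^{l z₁}) = 0
      have hzero : ∀ l : ℂ, (Complex.exp (z 0 * l) + Complex.exp (z 1 * l)) *
          (Complex.exp (z 0 * l) * Complex.exp (z 1 * l) + 1)
          - 4 * (Complex.exp (z 0 * l) * Complex.exp (z 1 * l)) = 0 := by
        intro l
        have hmem := hz l
        have heval : MvPolynomial.eval (fun i => ((expU (l * z i) : ℂˣ) : ℂ)) Delta15 = 0 := by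
          rcases hmem with hm | hm
          · exact hm
          · -- the point is `1`, and Δ(1,1) = 0
            have h1 : ∀ i : Fin 2, ((expU (l * z i) : ℂˣ) : ℂ) = 1 := by
              intro i
              have := congrFun hm i
              simpa using congrArg Units.val this
            simp only [h1, Delta15]
            simp only [map_sub, map_add, map_mul, map_one, eval_X, eval_C]
            norm_num
        simp only [Delta15, map_sub, map_add, map_mul, map_one, eval_X, eval_C, expU,
          Units.val_mk0] at heval
        rw [show l * z 0 = z 0 * l by ring, show l * z 1 = z 1 * l by ring] at heval
        linear_combination heval
      obtain ⟨h0, h1⟩ := key_aux (z 0) (z 1) hzero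
      funext i
      fin_cases i <;> simp [h0, h1]
    · rintro rfl
      intro l
      right
      have : ∀ i : Fin 2, expU (l * (0 : Fin 2 → ℂ) i) = 1 := by
        intro i
        ext
        simp [expU]
      funext i
      exact this i
  · intro j hj
    rw [Dtilde15_eq, map_add, map_add, map_add, hcomp_aux hom3_aux, hcomp_aux hom3'_aux,
      hcomp_aux (hom2_aux 0), hcomp_aux (hom2_aux 1)]
    interval_cases j <;> norm_num
  · rw [Dtilde15_eq, map_add, map_add, map_add, hcomp_aux hom3_aux, hcomp_aux hom3'_aux,
      hcomp_aux (hom2_aux 0), hcomp_aux (hom2_aux 1)]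
    norm_num
  · ext z
    simp only [Set.mem_setOf_eq, Set.mem_union]
    have hfac : z 0 ^ 2 + z 1 ^ 2 = (z 1 - Complex.I * z 0) * (z 1 + Complex.I * z 0) := by
      linear_combination (z 0 ^ 2) * Complex.I_sq
    constructor
    · intro h
      rw [hfac] at h
      rcases mul_eq_zero.mp h with h' | h'
      · left; have := sub_eq_zero.mp h'; linear_combination this
      · right
        have : z 1 = -(Complex.I * z 0) := by linear_combination h'
        rw [this]; ring
    · rintro (h | h) <;> rw [hfac, h] <;> ring
  · intro z hz hq
    obtain ⟨q0, hq0⟩ := hq 0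
    obtain ⟨q1, hq1⟩ := hq 1
    rw [hq0, hq1] at hz
    have : ((q0 ^ 2 + q1 ^ 2 : ℚ) : ℂ) = 0 := by push_cast; linear_combination hz
    have hq' : q0 ^ 2 + q1 ^ 2 = 0 := by exact_mod_cast this
    have h0 : q0 = 0 := by nlinarith [sq_nonneg q0, sq_nonneg q1]
    have h1 : q1 = 0 := by nlinarith [sq_nonneg q0, sq_nonneg q1]
    funext i
    fin_cases i <;> simp [hq0, hq1, h0, h1]
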